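/- Let U : ℝ^d → ℝ have gradient ξ = ∇U twice continuously differentiable, fix r > 0, and let ζ(t) = (x(t), w(t)) be a differentiable solution on an interval [0,T] of the ODE x'(t) = 2w(t), w'(t) = −2P(x(t))x(t) + 𝐛(x(t),w(t)), such that ξ(x(t)) ≠ 0 for all t ∈ [0,T]. If ξ̄(x(0))ᵀw(0) = 0, then ξ̄(x(t))ᵀw(t) = 0 for all t ∈ [0,T]. -/

import Mathlib

open MeasureTheory
open scoped RealInnerProductSpace

/-- The normalized vector field `ξ̄(x) = ξ(x)/|ξ(x)|` (junk value `0` on `𝒩 = {ξ = 0}`). -/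
noncomputable def xibar (d : ℕ) (ξ : EuclideanSpace ℝ (Fin d) → EuclideanSpace ℝ (Fin d))
    (x : EuclideanSpace ℝ (Fin d)) : EuclideanSpace ℝ (Fin d) :=
  ‖ξ x‖⁻¹ • ξ x

/-- The tangential projection `P(x)v = v − (ξ̄(x)ᵀv)ξ̄(x)`. -/
noncomputable def tangP (d : ℕ) (ξ : EuclideanSpace ℝ (Fin d) → EuclideanSpace ℝ (Fin d))
    (x v : EuclideanSpace ℝ (Fin d)) : EuclideanSpace ℝ (Fin d) :=
  v - ⟪xibar d ξ x, v⟫ • xibar d ξ x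

/-- The drift `𝐛(x,w) = −2(r²−|w|²−|x|²)·Dξ̄(x)ξ̄(x) − 2(wᵀDξ̄(x)w)·ξ̄(x)` of
the limit ODE. -/
noncomputable def limb (d : ℕ) (ξ : EuclideanSpace ℝ (Fin d) → EuclideanSpace ℝ (Fin d))
    (r : ℝ) (x w : EuclideanSpace ℝ (Fin d)) : EuclideanSpace ℝ (Fin d) :=
  (-2 * (r ^ 2 - ‖w‖ ^ 2 - ‖x‖ ^ 2)) • fderiv ℝ (xibar d ξ) x (xibar d ξ x)
    + (-2 * ⟪w, fderiv ℝ (xibar d ξ) x w⟫) • xibar d ξ x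

lemma norm_xibar_eq_one {d : ℕ} {ξ : EuclideanSpace ℝ (Fin d) → EuclideanSpace ℝ (Fin d)}
    {y : EuclideanSpace ℝ (Fin d)} (h : ξ y ≠ 0) : ‖xibar d ξ y‖ = 1 := by
  simp [xibar, norm_smul, abs_of_nonneg, inv_mul_cancel₀ (norm_ne_zero_iff.mpr h)]

lemma contDiffAt_xibar {d : ℕ} {ξ : EuclideanSpace ℝ (Fin d) → EuclideanSpace ℝ (Fin d)}
    (hξ : ContDiff ℝ 2 ξ) {y : EuclideanSpace ℝ (Fin d)} (h : ξ y ≠ 0) :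
    ContDiffAt ℝ 1 (xibar d ξ) y := by
  have h1 : ContDiffAt ℝ 1 ξ y := (hξ.of_le (by norm_num)).contDiffAt
  exact ((h1.norm ℝ h).inv (norm_ne_zero_iff.mpr h)).smul h1

lemma inner_xibar_fderiv {d : ℕ} {ξ : EuclideanSpace ℝ (Fin d) → EuclideanSpace ℝ (Fin d)}
    (hξ : ContDiff ℝ 2 ξ) {y : EuclideanSpace ℝ (Fin d)} (h : ξ y ≠ 0)
    (v : EuclideanSpace ℝ (Fin d)) :
    ⟪xibar d ξ y, fderiv ℝ (xibar d ξ) y v⟫ = 0 := by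
  set g := xibar d ξ
  have hg : HasFDerivAt g (fderiv ℝ g y) y :=
    ((contDiffAt_xibar hξ h).differentiableAt one_ne_zero).hasFDerivAt
  have hF : HasFDerivAt (fun z => ⟪g z, g z⟫)
      ((fderivInnerCLM ℝ (g y, g y)).comp <| (fderiv ℝ g y).prod (fderiv ℝ g y)) y :=
    hg.inner ℝ hg
  have hopen : IsOpen {z | ξ z ≠ 0} :=
    (isClosed_eq hξ.continuous continuous_const).isOpen_compl
  have heq : (fun z => ⟪g z, g z⟫) =ᶠ[nhds y] fun _ => (1 : ℝ) := by
    filter_upwards [hopen.mem_nhds h] with z hz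
    have := norm_xibar_eq_one (ξ := ξ) (d := d) hz
    rw [real_inner_self_eq_norm_sq, this]; norm_num
  have h0 : HasFDerivAt (fun z => ⟪g z, g z⟫) (0 : EuclideanSpace ℝ (Fin d) →L[ℝ] ℝ) y :=
    (hasFDerivAt_const (1 : ℝ) y).congr_of_eventuallyEq heq
  have := hF.unique h0
  have h2 := congrArg (fun (L : EuclideanSpace ℝ (Fin d) →L[ℝ] ℝ) => L v) this
  simp only [ContinuousLinearMap.comp_apply, ContinuousLinearMap.prod_apply,
    fderivInnerCLM_apply, ContinuousLinearMap.zero_apply] at h2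
  have hsym : ⟪fderiv ℝ g y v, g y⟫ = ⟪g y, fderiv ℝ g y v⟫ := real_inner_comm _ _
  linarith [h2, hsym]

/-- Along any solution of the limit ODE `x' = 2w`, `w' = −2P(x)x + 𝐛(x,w)` staying
away from `𝒩 = {ξ = 0}`, the tangentiality relation `ξ̄(x(t))ᵀw(t) = 0` is preserved. -/
theorem stmt_15 (d : ℕ) (U : EuclideanSpace ℝ (Fin d) → ℝ)
    (ξ : EuclideanSpace ℝ (Fin d) → EuclideanSpace ℝ (Fin d))
    (hgrad : ∀ y, HasGradientAt U (ξ y) y) (hξ_C2 : ContDiff ℝ 2 ξ)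
    (r T : ℝ) (hr : 0 < r) (hT : 0 ≤ T)
    (x w : ℝ → EuclideanSpace ℝ (Fin d))
    (hx' : ∀ t ∈ Set.Icc (0 : ℝ) T,
      HasDerivWithinAt x ((2 : ℝ) • w t) (Set.Icc (0 : ℝ) T) t)
    (hw' : ∀ t ∈ Set.Icc (0 : ℝ) T,
      HasDerivWithinAt w ((-2 : ℝ) • tangP d ξ (x t) (x t) + limb d ξ r (x t) (w t))
        (Set.Icc (0 : ℝ) T) t)
    (hne : ∀ t ∈ Set.Icc (0 : ℝ) T, ξ (x t) ≠ 0)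
    (h0 : ⟪xibar d ξ (x 0), w 0⟫ = 0) :
    ∀ t ∈ Set.Icc (0 : ℝ) T, ⟪xibar d ξ (x t), w t⟫ = 0 := by
  set g := xibar d ξ with hgdef
  set f : ℝ → ℝ := fun t => ⟪g (x t), w t⟫ with hfdef
  have key : ∀ t ∈ Set.Icc (0 : ℝ) T, HasDerivWithinAt f 0 (Set.Icc (0 : ℝ) T) t := by
    intro t ht
    have hnet := hne t ht
    have hA : HasFDerivAt g (fderiv ℝ g (x t)) (x t) :=
      ((contDiffAt_xibar hξ_C2 hnet).differentiableAt one_ne_zero).hasFDerivAt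
    have hgx : HasDerivWithinAt (fun s => g (x s)) (fderiv ℝ g (x t) ((2 : ℝ) • w t))
        (Set.Icc (0 : ℝ) T) t := hA.comp_hasDerivWithinAt t (hx' t ht)
    have hin := hgx.inner ℝ (hw' t ht)
    refine hin.congr_deriv ?_
    have hn1 : ‖g (x t)‖ = 1 := norm_xibar_eq_one hnet
    have hperp : ∀ v, ⟪g (x t), fderiv ℝ g (x t) v⟫ = 0 :=
      fun v => inner_xibar_fderiv hξ_C2 hnet v
    have hgg : ⟪g (x t), g (x t)⟫ = 1 := by
      rw [real_inner_self_eq_norm_sq, hn1]; norm_num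
    have e1 : ⟪g (x t), (-2 : ℝ) • tangP d ξ (x t) (x t) + limb d ξ r (x t) (w t)⟫
        = -2 * ⟪w t, fderiv ℝ g (x t) (w t)⟫ := by
      rw [inner_add_right, inner_smul_right]
      simp only [tangP, limb, ← hgdef]
      rw [inner_sub_right, inner_smul_right, hgg, inner_add_right, inner_smul_right,
        inner_smul_right, hperp, hgg]
      ring
    have e2 : ⟪fderiv ℝ g (x t) ((2 : ℝ) • w t), w t⟫
        = 2 * ⟪w t, fderiv ℝ g (x t) (w t)⟫ := by
      rw [ContinuousLinearMap.map_smul]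
      rw [real_inner_smul_left, real_inner_comm]
    rw [e1, e2]; ring
  have hcont : ContinuousOn f (Set.Icc (0 : ℝ) T) :=
    fun t ht => (key t ht).continuousWithinAt
  have hright : ∀ t ∈ Set.Ico (0 : ℝ) T,
      HasDerivWithinAt f 0 (Set.Ici t) t := by
    intro t ht
    refine (key t ⟨ht.1, le_of_lt ht.2⟩).mono_of_mem_nhdsWithin ?_
    have : Set.Icc t T ∈ nhdsWithin t (Set.Ici t) :=
      Filter.inter_mem self_mem_nhdsWithin
        (nhdsWithin_le_nhds (Iic_mem_nhds ht.2))
    exact Filter.mem_of_superset this (Set.Icc_subset_Icc_left ht.1)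
  intro t ht
  have := constant_of_has_deriv_right_zero hcont hright t ht
  calc ⟪g (x t), w t⟫ = f t := rfl
    _ = f 0 := this
    _ = 0 := h0
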